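/- arXiv:2602.07571 — 4 statements merged into one kernel-verified Lean document; each statement's English description precedes it below -/
import Mathlib

section
/- Let N ≥ 1, h = 1/N, let Δt > 0, β ∈ ℝ, γ > 0, and let m be a grid function with |m(I)| = 1 for every I. Then there exists a unique grid function ṽ such that (ṽ(I) − m(I))/Δt = −β m(I) × (Δ_h ṽ)(I) − γ m(I) × (m(I) × (Δ_h ṽ)(I)) for every I. -/
open scoped BigOperators RealInnerProductSpace

noncomputable section

/-- Euclidean 3-space. -/
abbrev E3 : Type := EuclideanSpace ℝ (Fin 3)

/-- Cross product on `E3`. -/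
def cross3 (a b : E3) : E3 :=
  (WithLp.equiv 2 (Fin 3 → ℝ)).symm
    ![a 1 * b 2 - a 2 * b 1, a 2 * b 0 - a 0 * b 2, a 0 * b 1 - a 1 * b 0]

/-- Index set of the triply periodic grid. -/
abbrev Idx (N : ℕ) := Fin 3 → ZMod N

/-- Grid functions. -/
abbrev GridFun (N : ℕ) := Idx N → E3

/-- Forward difference in direction `r`. -/
def fd {N : ℕ} (h : ℝ) (r : Fin 3) (f : GridFun N) (I : Idx N) : E3 :=
  (1 / h) • (f (I + Pi.single r 1) - f I)

/-- Centered average in direction `r`. -/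
def ca {N : ℕ} (r : Fin 3) (f : GridFun N) (I : Idx N) : E3 :=
  ((1 : ℝ) / 2) • (f (I + Pi.single r 1) + f I)

/-- Discrete Laplacian. -/
def dlap {N : ℕ} (h : ℝ) (f : GridFun N) (I : Idx N) : E3 :=
  ∑ r : Fin 3, (1 / h ^ 2) • (f (I + Pi.single r 1) - (2 : ℝ) • f I + f (I - Pi.single r 1))

/-- Squared discrete `L²` norm. -/
def l2sq {N : ℕ} [NeZero N] (h : ℝ) (f : GridFun N) : ℝ :=
  h ^ 3 * ∑ I : Idx N, ‖f I‖ ^ 2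

/-- Squared discrete gradient (`H¹` seminorm). -/
def gradsq {N : ℕ} [NeZero N] (h : ℝ) (f : GridFun N) : ℝ :=
  h ^ 3 * ∑ I : Idx N, ∑ r : Fin 3, ‖fd h r f I‖ ^ 2

/-- Discrete `ℓᵖ` norm, for real `p`. -/
def pnorm {N : ℕ} [NeZero N] (h p : ℝ) (f : GridFun N) : ℝ :=
  (h ^ 3 * ∑ I : Idx N, ‖f I‖ ^ p) ^ (1 / p)

/-- Discrete `ℓ^∞` norm. -/
def inorm {N : ℕ} [NeZero N] (f : GridFun N) : ℝ :=
  ⨆ I : Idx N, ‖f I‖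

/-- Discrete `ℓ^∞` norm of the gradient. -/
def ginorm {N : ℕ} [NeZero N] (h : ℝ) (f : GridFun N) : ℝ :=
  ⨆ I : Idx N, ⨆ r : Fin 3, ‖fd h r f I‖

lemma inner_cross3_self (a b : E3) : ⟪cross3 a b, b⟫ = 0 := by
  simp [cross3, PiLp.inner_apply, Fin.sum_univ_three, RCLike.inner_apply]
  ring

lemma inner_cross3_cross3 (a b : E3) :
    ⟪cross3 a (cross3 a b), b⟫ = ⟪a, b⟫ ^ 2 - ⟪a, a⟫ * ⟪b, b⟫ := by
  simp [cross3, PiLp.inner_apply, Fin.sum_univ_three, RCLike.inner_apply, EuclideanSpace.norm_sq_eq]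
  ring

lemma cross3_add_right (a b c : E3) : cross3 a (b + c) = cross3 a b + cross3 a c := by
  apply PiLp.ext; intro i
  fin_cases i <;> simp [cross3] <;> ring

lemma cross3_smul_right (a : E3) (t : ℝ) (b : E3) : cross3 a (t • b) = t • cross3 a b := by
  apply PiLp.ext; intro i
  fin_cases i <;> simp [cross3] <;> ring

lemma cross3_zero_right (a : E3) : cross3 a 0 = 0 := by
  apply PiLp.ext; intro i
  fin_cases i <;> simp [cross3]

section grid
variable {N : ℕ} [NeZero N]

lemma dlap_add (h : ℝ) (u v : GridFun N) : dlap h (u + v) = dlap h u + dlap h v := by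
  funext I
  simp only [dlap, Pi.add_apply, ← Finset.sum_add_distrib]
  refine Finset.sum_congr rfl fun r _ => ?_
  rw [← smul_add]; congr 1
  module

lemma dlap_smul (h : ℝ) (t : ℝ) (v : GridFun N) : dlap h (t • v) = t • dlap h v := by
  funext I
  simp only [dlap, Pi.smul_apply, Finset.smul_sum]
  refine Finset.sum_congr rfl fun r _ => ?_
  module

lemma sum_shift (F : Idx N → ℝ) (c : Idx N) : ∑ I : Idx N, F (I + c) = ∑ I : Idx N, F I :=
  Fintype.sum_equiv (Equiv.addRight c) _ _ (fun _ => rfl)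

lemma sum_shiftE (F : Idx N → E3) (c : Idx N) : ∑ I : Idx N, F (I + c) = ∑ I : Idx N, F I :=
  Fintype.sum_equiv (Equiv.addRight c) _ _ (fun _ => rfl)

lemma key_dir (v : GridFun N) (e : Idx N) :
    ∑ I : Idx N, ⟪v I, v (I + e) - (2 : ℝ) • v I + v (I - e)⟫
      = -∑ I : Idx N, ‖v (I + e) - v I‖ ^ 2 := by
  have h1 : ∑ I : Idx N, ⟪v (I + e), v I⟫ = ∑ I : Idx N, ⟪v I, v (I - e)⟫ := by
    have := sum_shift (fun I => ⟪v I, v (I - e)⟫) e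
    rw [← this]
    refine Finset.sum_congr rfl fun I _ => ?_
    simp [add_sub_cancel_right]
  have h2 : ∑ I : Idx N, ‖v (I + e)‖ ^ 2 = ∑ I : Idx N, ‖v I‖ ^ 2 :=
    sum_shift (fun I => ‖v I‖ ^ 2) e
  have lhs : ∀ I : Idx N, ⟪v I, v (I + e) - (2 : ℝ) • v I + v (I - e)⟫
      = ⟪v I, v (I + e)⟫ + ⟪v I, v (I - e)⟫ - 2 * ‖v I‖ ^ 2 := by
    intro I
    rw [inner_add_right, inner_sub_right, real_inner_smul_right, real_inner_self_eq_norm_sq]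
    ring
  have rhs : ∀ I : Idx N, ‖v (I + e) - v I‖ ^ 2
      = ‖v (I + e)‖ ^ 2 - 2 * ⟪v (I + e), v I⟫ + ‖v I‖ ^ 2 := by
    intro I
    rw [norm_sub_sq_real]
  simp only [lhs, rhs]
  rw [Finset.sum_sub_distrib, Finset.sum_add_distrib, Finset.sum_add_distrib,
    Finset.sum_sub_distrib]
  have e1 : ∑ I : Idx N, 2 * ‖v I‖ ^ 2 = 2 * ∑ I : Idx N, ‖v I‖ ^ 2 := by
    rw [Finset.mul_sum]
  have e2 : ∑ I : Idx N, 2 * ⟪v (I + e), v I⟫ = 2 * ∑ I : Idx N, ⟪v (I + e), v I⟫ := by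
    rw [Finset.mul_sum]
  have h3 : ∑ I : Idx N, ⟪v I, v (I + e)⟫ = ∑ I : Idx N, ⟪v (I + e), v I⟫ :=
    Finset.sum_congr rfl fun I _ => real_inner_comm _ _
  rw [e1, e2, h3, ← h1, h2]
  ring

lemma sum_inner_dlap (h : ℝ) (v : GridFun N) :
    ∑ I : Idx N, ⟪v I, dlap h v I⟫
      = -(1 / h ^ 2) * ∑ r : Fin 3, ∑ I : Idx N, ‖v (I + Pi.single r 1) - v I‖ ^ 2 := by
  have : ∀ I : Idx N, ⟪v I, dlap h v I⟫
      = ∑ r : Fin 3, (1 / h ^ 2) * ⟪v I, v (I + Pi.single r 1) - (2 : ℝ) • v I + v (I - Pi.single r 1)⟫ := by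
    intro I
    rw [dlap, inner_sum]
    exact Finset.sum_congr rfl fun r _ => real_inner_smul_right _ _ _
  simp only [this]
  rw [Finset.sum_comm]
  rw [Finset.mul_sum]
  refine Finset.sum_congr rfl fun r _ => ?_
  rw [← Finset.mul_sum, key_dir]
  ring

end grid

/-- unique solvability of the intermediate stage of the fully discrete scheme. -/
theorem statement5 (N : ℕ) [NeZero N] (hN : 1 ≤ N) (h Δt β γ : ℝ) (hh : h = 1 / (N : ℝ))
    (hΔt : 0 < Δt) (hγ : 0 < γ) (m : GridFun N) (hm : ∀ I, ‖m I‖ = 1) :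
    ∃! v : GridFun N, ∀ I : Idx N,
      (1 / Δt) • (v I - m I)
        = -(β • cross3 (m I) (dlap h v I))
            - γ • cross3 (m I) (cross3 (m I) (dlap h v I)) := by
  have hNpos : (0 : ℝ) < N := by
    exact_mod_cast Nat.lt_of_lt_of_le Nat.zero_lt_one hN
  have hhpos : 0 < h := by rw [hh]; positivity
  have hh2 : 0 < 1 / h ^ 2 := by positivity
  -- the linear operator
  set L : GridFun N →ₗ[ℝ] GridFun N :=
    { toFun := fun v I => v I + Δt • (β • cross3 (m I) (dlap h v I)
        + γ • cross3 (m I) (cross3 (m I) (dlap h v I)))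
      map_add' := by
        intro u v
        funext I
        simp only [dlap_add, Pi.add_apply, cross3_add_right, smul_add]
        module
      map_smul' := by
        intro t v
        funext I
        simp only [dlap_smul, Pi.smul_apply, cross3_smul_right, RingHom.id_apply]
        module } with hL
  have hLapply : ∀ v I, L v I = v I + Δt • (β • cross3 (m I) (dlap h v I)
      + γ • cross3 (m I) (cross3 (m I) (dlap h v I))) := fun v I => rfl
  -- injectivity
  have hinj : Function.Injective L := by
    rw [← LinearMap.ker_eq_bot, LinearMap.ker_eq_bot']
    intro v hv
    have hker : ∀ I, v I + Δt • (β • cross3 (m I) (dlap h v I)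
        + γ • cross3 (m I) (cross3 (m I) (dlap h v I))) = 0 := fun I => congrFun hv I
    set w : GridFun N := dlap h v with hw
    have hz : ∀ I : Idx N, ⟪v I, w I⟫ + Δt * γ * (⟪m I, w I⟫ ^ 2 - ‖w I‖ ^ 2) = 0 := by
      intro I
      have h1 : ⟪v I + Δt • (β • cross3 (m I) (w I)
          + γ • cross3 (m I) (cross3 (m I) (w I))), w I⟫ = 0 := by
        rw [hker I]; exact inner_zero_left _
      rw [inner_add_left, real_inner_smul_left, inner_add_left, real_inner_smul_left,
        real_inner_smul_left, inner_cross3_self, inner_cross3_cross3] at h1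
      have hm2 : ⟪m I, m I⟫ = 1 := by
        rw [real_inner_self_eq_norm_sq, hm I]; norm_num
      have hw2 : ⟪w I, w I⟫ = ‖w I‖ ^ 2 := real_inner_self_eq_norm_sq _
      rw [hm2, hw2] at h1
      linear_combination h1
    have hsum : ∑ I : Idx N, (⟪v I, w I⟫ + Δt * γ * (⟪m I, w I⟫ ^ 2 - ‖w I‖ ^ 2)) = 0 :=
      Finset.sum_eq_zero fun I _ => hz I
    rw [Finset.sum_add_distrib, ← Finset.mul_sum] at hsum
    have hdlap := sum_inner_dlap (N := N) h v
    rw [← hw] at hdlap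
    set A : ℝ := ∑ r : Fin 3, ∑ I : Idx N, ‖v (I + Pi.single r 1) - v I‖ ^ 2 with hA
    set C : ℝ := ∑ I : Idx N, (⟪m I, w I⟫ ^ 2 - ‖w I‖ ^ 2) with hC
    have hAnn : 0 ≤ A :=
      Finset.sum_nonneg fun r _ => Finset.sum_nonneg fun I _ => sq_nonneg _
    have hCnp : C ≤ 0 := by
      refine Finset.sum_nonpos fun I _ => ?_
      have := abs_real_inner_le_norm (m I) (w I)
      rw [hm I, one_mul] at this
      nlinarith [abs_nonneg ⟪m I, w I⟫, sq_abs ⟪m I, w I⟫]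
    rw [hdlap] at hsum
    have hA0 : A = 0 := by
      have h2 : (1 / h ^ 2) * A ≤ 0 := by
        have h3 : Δt * γ * C ≤ 0 := mul_nonpos_of_nonneg_of_nonpos (by positivity) hCnp
        linarith
      have h4 : (1 / h ^ 2) * A = 0 := le_antisymm h2 (mul_nonneg hh2.le hAnn)
      exact (mul_eq_zero.mp h4).resolve_left (ne_of_gt hh2)
    have hzero : ∀ (r : Fin 3) (I : Idx N), v (I + Pi.single r 1) = v I := by
      intro r I
      have h1 : ∑ I : Idx N, ‖v (I + Pi.single r 1) - v I‖ ^ 2 = 0 :=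
        (Finset.sum_eq_zero_iff_of_nonneg fun r _ =>
          Finset.sum_nonneg fun I _ => sq_nonneg _).mp hA0 r (Finset.mem_univ r)
      have h2 : ‖v (I + Pi.single r 1) - v I‖ ^ 2 = 0 :=
        (Finset.sum_eq_zero_iff_of_nonneg fun I _ => sq_nonneg _).mp h1 I (Finset.mem_univ I)
      have h3 : v (I + Pi.single r 1) - v I = 0 := by
        rw [pow_eq_zero_iff (two_ne_zero)] at h2
        exact norm_eq_zero.mp h2
      exact sub_eq_zero.mp h3
    have hwzero : ∀ I : Idx N, dlap h v I = 0 := by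
      intro I
      rw [dlap]
      refine Finset.sum_eq_zero fun r _ => ?_
      have ha := hzero r I
      have hb : v (I - Pi.single r 1) = v I := by
        have := hzero r (I - Pi.single r 1)
        rw [sub_add_cancel] at this
        exact this.symm
      rw [ha, hb]
      module
    funext I
    have h1 := hker I
    have h2 : w I = 0 := hwzero I
    simp only [h2, cross3_zero_right] at h1
    simpa using h1
  have hsurj : Function.Surjective L := LinearMap.injective_iff_surjective.mp hinj
  obtain ⟨v, hv⟩ := hsurj m
  -- equivalence of the two formulations
  have hequiv : ∀ u : GridFun N,
      (∀ I : Idx N, (1 / Δt) • (u I - m I)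
        = -(β • cross3 (m I) (dlap h u I))
            - γ • cross3 (m I) (cross3 (m I) (dlap h u I))) ↔ L u = m := by
    intro u
    constructor
    · intro H
      funext I
      rw [hLapply]
      have H' := congrArg (fun z : E3 => Δt • z) (H I)
      rw [smul_smul, mul_one_div, div_self hΔt.ne', one_smul] at H'
      linear_combination (norm := module) H'
    · intro H I
      have H' := congrFun H I
      rw [hLapply] at H'
      have H'' : u I - m I = -(Δt • (β • cross3 (m I) (dlap h u I)
          + γ • cross3 (m I) (cross3 (m I) (dlap h u I)))) := by
        linear_combination (norm := module) H'
      rw [H'', smul_neg, smul_smul, one_div_mul_cancel hΔt.ne', one_smul, neg_add]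
      abel
  refine ⟨v, (hequiv v).mpr hv, fun u hu => hinj ?_⟩
  rw [hv, (hequiv u).mp hu]
end
end

section
/- Let N ≥ 1, h = 1/N, Δt > 0, β ∈ ℝ, γ > 0, let m be a grid function with |m(I)| = 1 for every I, and let ṽ be a grid function satisfying (ṽ(I) − m(I))/Δt = −β m(I) × (Δ_h ṽ)(I) − γ m(I) × (m(I) × (Δ_h ṽ)(I)) for every I. Then ṽ(I)·m(I) = 1 for every I. -/
open scoped BigOperators RealInnerProductSpace

noncomputable section

lemma cross3_inner_self (a b : E3) : ⟪cross3 a b, a⟫ = 0 := by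
  simp only [cross3, EuclideanSpace.inner_eq_star_dotProduct]
  simp [dotProduct, Fin.sum_univ_three, Matrix.vecHead, Matrix.vecTail]
  ring

/-- pointwise `ṽ · m = 1` for the intermediate solution. -/
theorem statement12 (N : ℕ) [NeZero N] (hN : 1 ≤ N) (h Δt β γ : ℝ) (hh : h = 1 / (N : ℝ))
    (hΔt : 0 < Δt) (hγ : 0 < γ) (m v : GridFun N) (hm : ∀ I, ‖m I‖ = 1)
    (hscheme : ∀ I : Idx N,
      (1 / Δt) • (v I - m I)
        = -(β • cross3 (m I) (dlap h v I))
            - γ • cross3 (m I) (cross3 (m I) (dlap h v I))) :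
    ∀ I : Idx N, ⟪v I, m I⟫ = 1 := by
  intro I
  have hs := hscheme I
  have h0 : ⟪(1 / Δt) • (v I - m I), m I⟫ = (0 : ℝ) := by
    rw [hs]
    rw [inner_sub_left, inner_neg_left, inner_smul_left, inner_smul_left,
      cross3_inner_self, cross3_inner_self]
    ring
  rw [inner_smul_left, inner_sub_left, real_inner_self_eq_norm_sq, hm I] at h0
  have : ⟪v I, m I⟫ - 1 = 0 := by
    have hΔ : (1 / Δt) ≠ 0 := by positivity
    field_simp at h0
    simpa [hΔt.ne'] using h0
  linarith
end
end

section
/- Let p, w ∈ ℝ^3 with ‖p‖ = 1 and ‖w‖ ≥ 1, and set q = w/‖w‖. Then the two-sided renormalization error estimate holds: ‖p − q‖^2 + ‖w − q‖^2 ≤ ‖p − w‖^2 ≤ 2 ( ‖p − q‖^2 + ‖w − q‖^2 ). -/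
open scoped BigOperators RealInnerProductSpace

noncomputable section

/-- two-sided renormalization error estimate. -/
theorem statement15 (p w : E3) (hp : ‖p‖ = 1) (hw : 1 ≤ ‖w‖) :
    ‖p - ‖w‖⁻¹ • w‖ ^ 2 + ‖w - ‖w‖⁻¹ • w‖ ^ 2 ≤ ‖p - w‖ ^ 2 ∧
      ‖p - w‖ ^ 2 ≤ 2 * (‖p - ‖w‖⁻¹ • w‖ ^ 2 + ‖w - ‖w‖⁻¹ • w‖ ^ 2) := by
  set t : ℝ := ‖w‖ with ht
  have ht0 : (0:ℝ) < t := lt_of_lt_of_le one_pos hw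
  set b : ℝ := ⟪p, w⟫ with hb
  have hcs : |b| ≤ t := by
    simpa [hp, ht] using abs_real_inner_le_norm p w
  have hb1 : b ≤ t := (abs_le.mp hcs).2
  have hb2 : -t ≤ b := (abs_le.mp hcs).1
  have hst : t⁻¹ * t = 1 := inv_mul_cancel₀ ht0.ne'
  have hs0 : (0:ℝ) < t⁻¹ := inv_pos.mpr ht0
  have e1 : ‖p - t⁻¹ • w‖ ^ 2 = 2 - 2 * (t⁻¹ * b) := by
    rw [@norm_sub_sq_real]
    rw [real_inner_smul_right, norm_smul]
    have : ‖t⁻¹‖ = t⁻¹ := abs_of_pos hs0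
    rw [this, hp]
    nlinarith [hst]
  have e2 : ‖w - t⁻¹ • w‖ ^ 2 = (t - 1) ^ 2 := by
    have : w - t⁻¹ • w = (1 - t⁻¹) • w := by
      rw [sub_smul, one_smul]
    rw [this, norm_smul]
    have hle : t⁻¹ ≤ 1 := by
      rw [← hst]; nlinarith
    have : ‖(1 - t⁻¹ : ℝ)‖ = 1 - t⁻¹ := abs_of_nonneg (by linarith)
    rw [this, ← ht]
    nlinarith [hst]
  have e3 : ‖p - w‖ ^ 2 = 1 - 2 * b + t ^ 2 := by
    rw [@norm_sub_sq_real, hp, ← hb, ← ht]; ring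
  rw [e1, e2, e3]
  constructor
  · nlinarith [mul_nonneg (mul_nonneg hs0.le (sub_nonneg.mpr hb1)) (sub_nonneg.mpr hw), hst]
  · nlinarith [sq_nonneg (t - 2 + t⁻¹ * b), mul_nonneg (sub_nonneg.mpr hb1) (by linarith : (0:ℝ) ≤ t + b), hst, sq_nonneg (t⁻¹*b), mul_pos hs0 hs0]
end
end

section
/- There exists an absolute constant C > 0 with the following property. Let N ≥ 1, h = 1/N, let p be a grid function with |p(I)| = 1 for every I, let w be a grid function with |w(I)| ≥ 1 for every I, and define the error grid functions ẽ = p − w and e(I) = p(I) − w(I)/|w(I)|. If ‖ẽ‖_∞ ≤ 1, then ‖∇_h e‖_2^2 ≤ C ( (1 + ‖ẽ‖_∞^2) ‖∇_h ẽ‖_2^2 + ‖∇_h p‖_∞^2 · ‖ẽ‖_2^2 ); in particular ‖∇_h e‖_2 ≤ M_0 ( ‖ẽ‖_2 + ‖∇_h ẽ‖_2 ) for a constant M_0 depending only on ‖∇_h p‖_∞. -/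
open scoped BigOperators RealInnerProductSpace

noncomputable section

/-- Pointwise estimate for the renormalized error difference. -/
lemma key_pt (pI pJ wI wJ : E3) (hpI : ‖pI‖ = 1) (hpJ : ‖pJ‖ = 1)
    (hwI : 1 ≤ ‖wI‖) (hwJ : 1 ≤ ‖wJ‖) (heI : ‖pI - wI‖ ≤ 1) (heJ : ‖pJ - wJ‖ ≤ 1) :
    ‖(pJ - ‖wJ‖⁻¹ • wJ) - (pI - ‖wI‖⁻¹ • wI)‖ ≤
      5 * ‖(pJ - wJ) - (pI - wI)‖ + ‖pJ - pI‖ * (‖pJ - wJ‖ + 2 * ‖pI - wI‖) := by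
  have ha : (0:ℝ) < ‖wI‖ := lt_of_lt_of_le one_pos hwI
  have hb : (0:ℝ) < ‖wJ‖ := lt_of_lt_of_le one_pos hwJ
  set a := ‖wI‖ with hadef
  set b := ‖wJ‖ with hbdef
  have hbsq : b^2 = 1 - 2*⟪pJ, pJ - wJ⟫ + ‖pJ - wJ‖^2 := by
    have h0 : pJ - (pJ - wJ) = wJ := sub_sub_cancel _ _
    calc b^2 = ‖pJ - (pJ - wJ)‖^2 := by rw [h0]
      _ = ‖pJ‖^2 - 2*⟪pJ, pJ - wJ⟫ + ‖pJ - wJ‖^2 := norm_sub_sq_real _ _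
      _ = 1 - 2*⟪pJ, pJ - wJ⟫ + ‖pJ - wJ‖^2 := by rw [hpJ]; ring
  have hasq : a^2 = 1 - 2*⟪pI, pI - wI⟫ + ‖pI - wI‖^2 := by
    have h0 : pI - (pI - wI) = wI := sub_sub_cancel _ _
    calc a^2 = ‖pI - (pI - wI)‖^2 := by rw [h0]
      _ = ‖pI‖^2 - 2*⟪pI, pI - wI⟫ + ‖pI - wI‖^2 := norm_sub_sq_real _ _
      _ = 1 - 2*⟪pI, pI - wI⟫ + ‖pI - wI‖^2 := by rw [hpI]; ring
  have hinner : ⟪pJ, pJ - wJ⟫ - ⟪pI, pI - wI⟫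
      = ⟪pJ, (pJ - wJ) - (pI - wI)⟫ + ⟪pJ - pI, pI - wI⟫ := by
    simp [inner_sub_left, inner_sub_right]; ring
  have hd1 : |‖pJ - wJ‖ - ‖pI - wI‖| ≤ ‖(pJ - wJ) - (pI - wI)‖ := abs_norm_sub_norm_le _ _
  have hd2 : |⟪pJ, (pJ - wJ) - (pI - wI)⟫| ≤ ‖(pJ - wJ) - (pI - wI)‖ := by
    have := abs_real_inner_le_norm pJ ((pJ - wJ) - (pI - wI))
    rwa [hpJ, one_mul] at this
  have hd3 : |⟪pJ - pI, pI - wI⟫| ≤ ‖pJ - pI‖ * ‖pI - wI‖ := abs_real_inner_le_norm _ _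
  have hsqdiff : |b^2 - a^2| ≤ 4*‖(pJ - wJ) - (pI - wI)‖ + 2*(‖pJ - pI‖ * ‖pI - wI‖) := by
    have h1 : |‖pJ - wJ‖^2 - ‖pI - wI‖^2| ≤ 2*‖(pJ - wJ) - (pI - wI)‖ := by
      have h2 : ‖pJ - wJ‖^2 - ‖pI - wI‖^2
          = (‖pJ - wJ‖ - ‖pI - wI‖)*(‖pJ - wJ‖ + ‖pI - wI‖) := by ring
      rw [h2, abs_mul]
      have h3 : |‖pJ - wJ‖ + ‖pI - wI‖| ≤ 2 := by
        rw [abs_of_nonneg (by positivity)]; linarith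
      calc |‖pJ - wJ‖ - ‖pI - wI‖| * |‖pJ - wJ‖ + ‖pI - wI‖|
          ≤ ‖(pJ - wJ) - (pI - wI)‖ * 2 :=
            mul_le_mul hd1 h3 (abs_nonneg _) (norm_nonneg _)
        _ = 2*‖(pJ - wJ) - (pI - wI)‖ := by ring
    have h4 : b^2 - a^2 = (‖pJ - wJ‖^2 - ‖pI - wI‖^2)
        - 2*(⟪pJ, (pJ - wJ) - (pI - wI)⟫ + ⟪pJ - pI, pI - wI⟫) := by
      rw [← hinner, hbsq, hasq]; ring
    rw [h4]
    have h6 := abs_add_le (⟪pJ, (pJ - wJ) - (pI - wI)⟫) (⟪pJ - pI, pI - wI⟫)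
    calc |(‖pJ - wJ‖^2 - ‖pI - wI‖^2)
        - 2*(⟪pJ, (pJ - wJ) - (pI - wI)⟫ + ⟪pJ - pI, pI - wI⟫)|
        ≤ |‖pJ - wJ‖^2 - ‖pI - wI‖^2|
          + |2*(⟪pJ, (pJ - wJ) - (pI - wI)⟫ + ⟪pJ - pI, pI - wI⟫)| := abs_sub _ _
      _ ≤ 4*‖(pJ - wJ) - (pI - wI)‖ + 2*(‖pJ - pI‖ * ‖pI - wI‖) := by
          rw [abs_mul, (by norm_num : |(2:ℝ)| = 2)]
          linarith
  have hinv : |a⁻¹ - b⁻¹| ≤ 2*‖(pJ - wJ) - (pI - wI)‖ + ‖pJ - pI‖ * ‖pI - wI‖ := by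
    have e1 : a⁻¹ - b⁻¹ = (b^2 - a^2) / (a*b*(b+a)) := by field_simp; ring
    have e2 : |a⁻¹ - b⁻¹| ≤ |b^2 - a^2| / 2 := by
      rw [e1, abs_div, abs_of_pos (by positivity : (0:ℝ) < a*b*(b+a))]
      have h6 : (2:ℝ) ≤ a*b*(b+a) := by nlinarith
      gcongr
    linarith
  have hid : (pJ - b⁻¹ • wJ) - (pI - a⁻¹ • wI)
      = (1-b⁻¹) • (pJ - pI) + (a⁻¹-b⁻¹) • pI + b⁻¹ • ((pJ - wJ) - (pI - wI))
        + (b⁻¹-a⁻¹) • (pI - wI) := by module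
  have tri : ‖(pJ - b⁻¹ • wJ) - (pI - a⁻¹ • wI)‖
      ≤ |1-b⁻¹| * ‖pJ - pI‖ + |a⁻¹-b⁻¹| * ‖pI‖ + |b⁻¹| * ‖(pJ - wJ) - (pI - wI)‖
        + |b⁻¹-a⁻¹| * ‖pI - wI‖ := by
    rw [hid]
    calc ‖(1-b⁻¹) • (pJ - pI) + (a⁻¹-b⁻¹) • pI + b⁻¹ • ((pJ - wJ) - (pI - wI))
          + (b⁻¹-a⁻¹) • (pI - wI)‖
        ≤ ‖(1-b⁻¹) • (pJ - pI) + (a⁻¹-b⁻¹) • pI + b⁻¹ • ((pJ - wJ) - (pI - wI))‖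
          + ‖(b⁻¹-a⁻¹) • (pI - wI)‖ := norm_add_le _ _
      _ ≤ (‖(1-b⁻¹) • (pJ - pI) + (a⁻¹-b⁻¹) • pI‖ + ‖b⁻¹ • ((pJ - wJ) - (pI - wI))‖)
          + ‖(b⁻¹-a⁻¹) • (pI - wI)‖ := by gcongr; exact norm_add_le _ _
      _ ≤ ((‖(1-b⁻¹) • (pJ - pI)‖ + ‖(a⁻¹-b⁻¹) • pI‖) + ‖b⁻¹ • ((pJ - wJ) - (pI - wI))‖)
          + ‖(b⁻¹-a⁻¹) • (pI - wI)‖ := by gcongr; exact norm_add_le _ _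
      _ = |1-b⁻¹| * ‖pJ - pI‖ + |a⁻¹-b⁻¹| * ‖pI‖ + |b⁻¹| * ‖(pJ - wJ) - (pI - wI)‖
          + |b⁻¹-a⁻¹| * ‖pI - wI‖ := by
          simp only [norm_smul, Real.norm_eq_abs]
  have hbinv : b * b⁻¹ = 1 := mul_inv_cancel₀ hb.ne'
  have h7 : b⁻¹ ≤ 1 := by
    rw [show (1:ℝ) = 1⁻¹ by norm_num]
    exact inv_anti₀ one_pos hwJ
  have h8 : b - 1 ≤ ‖pJ - wJ‖ := by
    have h := norm_sub_norm_le wJ pJ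
    rw [norm_sub_rev] at h
    rw [hpJ] at h
    linarith
  have h9 : 1 - b⁻¹ ≤ b - 1 := by
    have key : b - 1 - (1 - b⁻¹) = (b-1)^2 / b := by field_simp
    have key2 : 0 ≤ (b-1)^2 / b := by positivity
    linarith
  have hb1 : |1-b⁻¹| ≤ ‖pJ - wJ‖ := by
    rw [abs_of_nonneg (by linarith)]
    linarith
  have hb2 : |b⁻¹| ≤ 1 := by rw [abs_of_pos (inv_pos.mpr hb)]; exact h7
  have t1 : |1-b⁻¹| * ‖pJ - pI‖ ≤ ‖pJ - wJ‖ * ‖pJ - pI‖ :=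
    mul_le_mul_of_nonneg_right hb1 (norm_nonneg _)
  have t2 : |b⁻¹| * ‖(pJ - wJ) - (pI - wI)‖ ≤ ‖(pJ - wJ) - (pI - wI)‖ := by
    calc |b⁻¹| * ‖(pJ - wJ) - (pI - wI)‖ ≤ 1 * ‖(pJ - wJ) - (pI - wI)‖ :=
          mul_le_mul_of_nonneg_right hb2 (norm_nonneg _)
      _ = ‖(pJ - wJ) - (pI - wI)‖ := one_mul _
  have t4 : |b⁻¹-a⁻¹| * ‖pI - wI‖ ≤ 2*‖(pJ - wJ) - (pI - wI)‖ + ‖pJ - pI‖ * ‖pI - wI‖ := by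
    have h10 : |b⁻¹-a⁻¹| = |a⁻¹-b⁻¹| := abs_sub_comm _ _
    calc |b⁻¹-a⁻¹| * ‖pI - wI‖
        ≤ (2*‖(pJ - wJ) - (pI - wI)‖ + ‖pJ - pI‖ * ‖pI - wI‖) * 1 := by
          rw [h10]
          exact mul_le_mul hinv heI (norm_nonneg _) (by positivity)
      _ = 2*‖(pJ - wJ) - (pI - wI)‖ + ‖pJ - pI‖ * ‖pI - wI‖ := mul_one _
  rw [hpI] at tri
  linarith [tri, t1, t2, t4, hinv]

lemma my_sqrt_add_le (A B : ℝ) (hA : 0 ≤ A) (hB : 0 ≤ B) :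
    Real.sqrt (A + B) ≤ Real.sqrt A + Real.sqrt B := by
  have h1 : A + B ≤ (Real.sqrt A + Real.sqrt B)^2 := by
    have hA' := Real.sq_sqrt hA
    have hB' := Real.sq_sqrt hB
    nlinarith [Real.sqrt_nonneg A, Real.sqrt_nonneg B, mul_nonneg (Real.sqrt_nonneg A) (Real.sqrt_nonneg B)]
  calc Real.sqrt (A + B) ≤ Real.sqrt ((Real.sqrt A + Real.sqrt B)^2) := Real.sqrt_le_sqrt h1
    _ = Real.sqrt A + Real.sqrt B := Real.sqrt_sq (by positivity)

/-- Core estimate. -/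
lemma core_est {N : ℕ} [NeZero N] (p w : GridFun N) (hp : ∀ I, ‖p I‖ = 1)
    (hw : ∀ I, 1 ≤ ‖w I‖) (hsm : ∀ I, ‖p I - w I‖ ≤ 1) :
    gradsq (1/(N:ℝ)) (fun I => p I - ‖w I‖⁻¹ • w I)
      ≤ 50 * gradsq (1/(N:ℝ)) (fun I => p I - w I)
        + 60 * ginorm (1/(N:ℝ)) p ^ 2 * l2sq (1/(N:ℝ)) (fun I => p I - w I) := by
  have hN : (0:ℝ) < (N:ℝ) := by
    exact_mod_cast Nat.pos_of_ne_zero (NeZero.ne N)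
  set h : ℝ := 1/(N:ℝ) with hdef
  have hpos : 0 < h := by positivity
  set G := ginorm h p with hGdef
  have hG : ∀ (I : Idx N) (r : Fin 3), ‖fd h r p I‖ ≤ G := by
    intro I r
    show ‖fd h r p I‖ ≤ ⨆ I : Idx N, ⨆ r : Fin 3, ‖fd h r p I‖
    have h1 : ‖fd h r p I‖ ≤ ⨆ r' : Fin 3, ‖fd h r' p I‖ :=
      le_ciSup (f := fun r' : Fin 3 => ‖fd h r' p I‖)
        (Set.Finite.bddAbove (Set.finite_range _)) r
    exact h1.trans (le_ciSup (f := fun I' : Idx N => ⨆ r' : Fin 3, ‖fd h r' p I'‖)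
      (Set.Finite.bddAbove (Set.finite_range _)) I)
  have hnorm : ∀ (f : GridFun N) (I : Idx N) (r : Fin 3),
      ‖fd h r f I‖ = (N:ℝ) * ‖f (I + Pi.single r 1) - f I‖ := by
    intro f I r
    rw [fd, norm_smul, Real.norm_eq_abs]
    rw [show 1/h = (N:ℝ) by rw [hdef]; field_simp]
    rw [abs_of_pos hN]
  -- pointwise fd bound
  have hfd : ∀ (I : Idx N) (r : Fin 3),
      ‖fd h r (fun I => p I - ‖w I‖⁻¹ • w I) I‖
        ≤ 5 * ‖fd h r (fun I => p I - w I) I‖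
          + G * (‖p (I + Pi.single r 1) - w (I + Pi.single r 1)‖ + 2 * ‖p I - w I‖) := by
    intro I r
    set J := I + Pi.single r 1 with hJ
    have k := key_pt (p I) (p J) (w I) (w J) (hp I) (hp J) (hw I) (hw J) (hsm I) (hsm J)
    have hnn : (0:ℝ) ≤ ‖p J - w J‖ + 2 * ‖p I - w I‖ := by positivity
    calc ‖fd h r (fun I => p I - ‖w I‖⁻¹ • w I) I‖
        = (N:ℝ) * ‖(p J - ‖w J‖⁻¹ • w J) - (p I - ‖w I‖⁻¹ • w I)‖ := hnorm _ I r
      _ ≤ (N:ℝ) * (5 * ‖(p J - w J) - (p I - w I)‖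
            + ‖p J - p I‖ * (‖p J - w J‖ + 2 * ‖p I - w I‖)) :=
          mul_le_mul_of_nonneg_left k hN.le
      _ = 5 * ((N:ℝ) * ‖(p J - w J) - (p I - w I)‖)
            + ((N:ℝ) * ‖p J - p I‖) * (‖p J - w J‖ + 2 * ‖p I - w I‖) := by ring
      _ = 5 * ‖fd h r (fun I => p I - w I) I‖
            + ‖fd h r p I‖ * (‖p J - w J‖ + 2 * ‖p I - w I‖) := by
          rw [hnorm (fun I => p I - w I) I r, hnorm p I r]
      _ ≤ 5 * ‖fd h r (fun I => p I - w I) I‖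
            + G * (‖p J - w J‖ + 2 * ‖p I - w I‖) := by
          have := mul_le_mul_of_nonneg_right (hG I r) hnn
          linarith
  -- squared pointwise bound
  have hsq : ∀ (I : Idx N) (r : Fin 3),
      ‖fd h r (fun I => p I - ‖w I‖⁻¹ • w I) I‖^2
        ≤ 50 * ‖fd h r (fun I => p I - w I) I‖^2
          + 4 * G^2 * ‖p (I + Pi.single r 1) - w (I + Pi.single r 1)‖^2
          + 16 * G^2 * ‖p I - w I‖^2 := by
    intro I r
    have k := hfd I r
    have h0 : (0:ℝ) ≤ ‖fd h r (fun I => p I - ‖w I‖⁻¹ • w I) I‖ := norm_nonneg _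
    have k2 : ‖fd h r (fun I => p I - ‖w I‖⁻¹ • w I) I‖^2
        ≤ (5 * ‖fd h r (fun I => p I - w I) I‖
          + G * (‖p (I + Pi.single r 1) - w (I + Pi.single r 1)‖ + 2 * ‖p I - w I‖))^2 :=
      pow_le_pow_left₀ h0 k 2
    nlinarith [k2,
      sq_nonneg (5 * ‖fd h r (fun I => p I - w I) I‖
        - G * ‖p (I + Pi.single r 1) - w (I + Pi.single r 1)‖ - 2 * G * ‖p I - w I‖),
      sq_nonneg (G * ‖p (I + Pi.single r 1) - w (I + Pi.single r 1)‖ - 2 * G * ‖p I - w I‖)]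
  -- shift invariance
  have hshift : ∀ r : Fin 3,
      (∑ I : Idx N, ‖p (I + Pi.single r 1) - w (I + Pi.single r 1)‖^2)
        = ∑ I : Idx N, ‖p I - w I‖^2 := by
    intro r
    exact Equiv.sum_comp (Equiv.addRight (Pi.single r 1 : Idx N))
      (fun I => ‖p I - w I‖^2)
  -- sum everything
  have S1 : (∑ I : Idx N, ∑ r : Fin 3, ‖fd h r (fun I => p I - ‖w I‖⁻¹ • w I) I‖^2)
      ≤ 50 * (∑ I : Idx N, ∑ r : Fin 3, ‖fd h r (fun I => p I - w I) I‖^2)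
        + 60 * G^2 * (∑ I : Idx N, ‖p I - w I‖^2) := by
    have step : (∑ I : Idx N, ∑ r : Fin 3, ‖fd h r (fun I => p I - ‖w I‖⁻¹ • w I) I‖^2)
        ≤ ∑ I : Idx N, ∑ r : Fin 3,
            (50 * ‖fd h r (fun I => p I - w I) I‖^2
              + 4 * G^2 * ‖p (I + Pi.single r 1) - w (I + Pi.single r 1)‖^2
              + 16 * G^2 * ‖p I - w I‖^2) :=
      Finset.sum_le_sum (fun I _ => Finset.sum_le_sum (fun r _ => hsq I r))
    refine step.trans (le_of_eq ?_)
    have T1 : (∑ I : Idx N, ∑ r : Fin 3, 50 * ‖fd h r (fun I => p I - w I) I‖^2)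
        = 50 * ∑ I : Idx N, ∑ r : Fin 3, ‖fd h r (fun I => p I - w I) I‖^2 := by
      simp_rw [← Finset.mul_sum]
    have T2 : (∑ I : Idx N, ∑ r : Fin 3,
          4 * G^2 * ‖p (I + Pi.single r 1) - w (I + Pi.single r 1)‖^2)
        = 12 * G^2 * ∑ I : Idx N, ‖p I - w I‖^2 := by
      rw [Finset.sum_comm]
      have e1 : ∀ r : Fin 3, (∑ I : Idx N,
            4 * G^2 * ‖p (I + Pi.single r 1) - w (I + Pi.single r 1)‖^2)
          = 4 * G^2 * ∑ I : Idx N, ‖p I - w I‖^2 := by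
        intro r
        rw [← Finset.mul_sum, hshift r]
      rw [Finset.sum_congr rfl (fun r _ => e1 r), Finset.sum_const, Finset.card_univ]
      simp only [Fintype.card_fin, nsmul_eq_mul]
      ring
    have T3 : (∑ I : Idx N, ∑ r : Fin 3, 16 * G^2 * ‖p I - w I‖^2)
        = 48 * G^2 * ∑ I : Idx N, ‖p I - w I‖^2 := by
      have e2 : ∀ I : Idx N, (∑ _r : Fin 3, 16 * G^2 * ‖p I - w I‖^2)
          = 48 * G^2 * ‖p I - w I‖^2 := by
        intro I
        rw [Finset.sum_const, Finset.card_univ]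
        simp only [Fintype.card_fin, nsmul_eq_mul]
        ring
      rw [Finset.sum_congr rfl (fun I _ => e2 I), ← Finset.mul_sum]
    simp only [Finset.sum_add_distrib]
    rw [T1, T2, T3]
    ring
  -- conclude
  rw [gradsq, gradsq, l2sq]
  have hh3 : (0:ℝ) ≤ h^3 := by positivity
  calc h ^ 3 * ∑ I : Idx N, ∑ r : Fin 3, ‖fd h r (fun I => p I - ‖w I‖⁻¹ • w I) I‖^2
      ≤ h ^ 3 * (50 * (∑ I : Idx N, ∑ r : Fin 3, ‖fd h r (fun I => p I - w I) I‖^2)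
          + 60 * G^2 * (∑ I : Idx N, ‖p I - w I‖^2)) := mul_le_mul_of_nonneg_left S1 hh3
    _ = 50 * (h ^ 3 * ∑ I : Idx N, ∑ r : Fin 3, ‖fd h r (fun I => p I - w I) I‖^2)
          + 60 * G^2 * (h ^ 3 * ∑ I : Idx N, ‖p I - w I‖^2) := by ring

/-- gradient estimate for the renormalized error. -/
theorem statement16 :
    (∃ C : ℝ, 0 < C ∧
      ∀ (N : ℕ) [NeZero N] (p w : GridFun N),
        (∀ I, ‖p I‖ = 1) → (∀ I, 1 ≤ ‖w I‖) →
        inorm (fun I => p I - w I) ≤ 1 →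
        gradsq (1 / (N : ℝ)) (fun I => p I - ‖w I‖⁻¹ • w I)
          ≤ C * ((1 + inorm (fun I => p I - w I) ^ 2)
                  * gradsq (1 / (N : ℝ)) (fun I => p I - w I)
                + ginorm (1 / (N : ℝ)) p ^ 2 * l2sq (1 / (N : ℝ)) (fun I => p I - w I))) ∧
    ∃ M : ℝ → ℝ, (∀ x : ℝ, 0 < M x) ∧
      ∀ (N : ℕ) [NeZero N] (p w : GridFun N),
        (∀ I, ‖p I‖ = 1) → (∀ I, 1 ≤ ‖w I‖) →
        inorm (fun I => p I - w I) ≤ 1 →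
        Real.sqrt (gradsq (1 / (N : ℝ)) (fun I => p I - ‖w I‖⁻¹ • w I))
          ≤ M (ginorm (1 / (N : ℝ)) p) *
              (Real.sqrt (l2sq (1 / (N : ℝ)) (fun I => p I - w I))
                + Real.sqrt (gradsq (1 / (N : ℝ)) (fun I => p I - w I))) := by
  have main : ∀ (N : ℕ) [NeZero N] (p w : GridFun N),
      (∀ I, ‖p I‖ = 1) → (∀ I, 1 ≤ ‖w I‖) →
      inorm (fun I => p I - w I) ≤ 1 →
      gradsq (1/(N:ℝ)) (fun I => p I - ‖w I‖⁻¹ • w I)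
        ≤ 50 * gradsq (1/(N:ℝ)) (fun I => p I - w I)
          + 60 * ginorm (1/(N:ℝ)) p ^ 2 * l2sq (1/(N:ℝ)) (fun I => p I - w I) := by
    intro N _ p w hp hw hsm
    refine core_est p w hp hw (fun I => ?_)
    have h1 : ‖p I - w I‖ ≤ inorm (fun I => p I - w I) := by
      show _ ≤ ⨆ I : Idx N, ‖p I - w I‖
      exact le_ciSup (f := fun I : Idx N => ‖p I - w I‖)
        (Set.Finite.bddAbove (Set.finite_range _)) I
    exact h1.trans hsm
  have nonneg : ∀ (N : ℕ) [NeZero N] (f : GridFun N),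
      0 ≤ gradsq (1/(N:ℝ)) f ∧ 0 ≤ l2sq (1/(N:ℝ)) f := by
    intro N _ f
    have hN : (0:ℝ) < (N:ℝ) := by
      exact_mod_cast Nat.pos_of_ne_zero (NeZero.ne N)
    constructor
    · rw [gradsq]
      positivity
    · rw [l2sq]
      positivity
  constructor
  · refine ⟨60, by norm_num, ?_⟩
    intro N _ p w hp hw hsm
    have h1 := main N p w hp hw hsm
    have hA := (nonneg N (fun I => p I - w I)).1
    have hB := (nonneg N (fun I => p I - w I)).2
    nlinarith [sq_nonneg (inorm (fun I => p I - w I)),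
      mul_nonneg (sq_nonneg (inorm (fun I => p I - w I))) hA]
  · refine ⟨fun x => 8 * (1 + x^2), fun x => by positivity, ?_⟩
    intro N _ p w hp hw hsm
    have h1 := main N p w hp hw hsm
    have hA := (nonneg N (fun I => p I - w I)).1
    have hB := (nonneg N (fun I => p I - w I)).2
    set x := ginorm (1/(N:ℝ)) p with hx
    set A := gradsq (1/(N:ℝ)) (fun I => p I - w I) with hAdef
    set B := l2sq (1/(N:ℝ)) (fun I => p I - w I) with hBdef
    have c1 : (0:ℝ) ≤ 64*(1+x^2)^2 - 50 := by nlinarith [sq_nonneg x, sq_nonneg (x^2)]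
    have c2 : (0:ℝ) ≤ 64*(1+x^2)^2 - 60*x^2 := by nlinarith [sq_nonneg x, sq_nonneg (x^2), sq_nonneg (1 - x^2)]
    have s1 : gradsq (1/(N:ℝ)) (fun I => p I - ‖w I‖⁻¹ • w I) ≤ 64*(1+x^2)^2*(B+A) := by
      nlinarith [mul_nonneg c1 hA, mul_nonneg c2 hB]
    have s2 : Real.sqrt (gradsq (1/(N:ℝ)) (fun I => p I - ‖w I‖⁻¹ • w I))
        ≤ Real.sqrt (64*(1+x^2)^2*(B+A)) := Real.sqrt_le_sqrt s1
    have s3 : Real.sqrt (64*(1+x^2)^2*(B+A)) = 8*(1+x^2) * Real.sqrt (B+A) := by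
      rw [show 64*(1+x^2)^2*(B+A) = (8*(1+x^2))^2 * (B+A) by ring,
        Real.sqrt_mul (sq_nonneg _), Real.sqrt_sq (by positivity : (0:ℝ) ≤ 8*(1+x^2))]
    have s4 : Real.sqrt (B+A) ≤ Real.sqrt B + Real.sqrt A := my_sqrt_add_le B A hB hA
    calc Real.sqrt (gradsq (1/(N:ℝ)) (fun I => p I - ‖w I‖⁻¹ • w I))
        ≤ 8*(1+x^2) * Real.sqrt (B+A) := by rw [← s3]; exact s2
      _ ≤ 8*(1+x^2) * (Real.sqrt B + Real.sqrt A) :=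
          mul_le_mul_of_nonneg_left s4 (by positivity)
end
end
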